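/- Let κ ∈ ℝ, γ > 0 with κ ≤ 0 and γ > 1, or κ > 0 and γ ≥ 1. Define α₊ = ((2-γ)κ + γ√(κ² + 2γ(γ-1)))/(2κ² + γ³) and β₋ = (κ² + γ² - κ√(κ² + 2γ(γ-1)))/(2κ² + γ³). Then the set S = {(x,y) ∈ ℝ² : x > 0, y > 0, κx + γy = 1, γx² + 2y² = 2y} equals {(α₊, β₋)}. -/

import Mathlib

theorem stmt_0 (κ γ : ℝ) (hγ : 0 < γ)
    (h : (κ ≤ 0 ∧ 1 < γ) ∨ (0 < κ ∧ 1 ≤ γ)) :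
    {p : ℝ × ℝ | 0 < p.1 ∧ 0 < p.2 ∧ κ * p.1 + γ * p.2 = 1 ∧
        γ * p.1 ^ 2 + 2 * p.2 ^ 2 = 2 * p.2} =
      {(((2 - γ) * κ + γ * Real.sqrt (κ ^ 2 + 2 * γ * (γ - 1))) / (2 * κ ^ 2 + γ ^ 3),
        (κ ^ 2 + γ ^ 2 - κ * Real.sqrt (κ ^ 2 + 2 * γ * (γ - 1))) / (2 * κ ^ 2 + γ ^ 3))} := by
  have hD : (0:ℝ) < 2 * κ ^ 2 + γ ^ 3 := by positivity
  have hDne : (2 * κ ^ 2 + γ ^ 3) ≠ 0 := ne_of_gt hD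
  set s : ℝ := Real.sqrt (κ ^ 2 + 2 * γ * (γ - 1)) with hs_def
  have harg : (0:ℝ) ≤ κ ^ 2 + 2 * γ * (γ - 1) := by
    rcases h with ⟨h1, h2⟩ | ⟨h1, h2⟩ <;> nlinarith
  have hs2 : s ^ 2 = κ ^ 2 + 2 * γ * (γ - 1) := Real.sq_sqrt harg
  have hs0 : (0:ℝ) ≤ s := Real.sqrt_nonneg _
  have hβpos : 0 < κ ^ 2 + γ ^ 2 - κ * s := by
    rcases h with ⟨h1, h2⟩ | ⟨h1, h2⟩
    · nlinarith
    · nlinarith [sq_nonneg (κ - s), sq_nonneg (κ * s - κ ^ 2 - γ ^ 2)]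
  have hαpos : 0 < (2 - γ) * κ + γ * s := by
    rcases h with ⟨h1, h2⟩ | ⟨h1, h2⟩
    · nlinarith [sq_nonneg (γ * s + (2 - γ) * κ), mul_pos hγ (show (0:ℝ) < s by nlinarith)]
    · nlinarith [sq_nonneg (s - κ)]
  have hαle : (2 - γ) * κ - γ * s ≤ 0 := by
    rcases h with ⟨h1, h2⟩ | ⟨h1, h2⟩
    · nlinarith [sq_nonneg (γ * s - (2 - γ) * κ), mul_nonneg hγ.le hs0]
    · nlinarith [sq_nonneg (s - κ)]
  -- key ellipse identity at the claimed point
  have key : γ * ((2 - γ) * κ + γ * s) ^ 2 + 2 * (κ ^ 2 + γ ^ 2 - κ * s) ^ 2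
      - 2 * (κ ^ 2 + γ ^ 2 - κ * s) * (2 * κ ^ 2 + γ ^ 3)
      = (2 * κ ^ 2 + γ ^ 3) * (s ^ 2 - (κ ^ 2 + 2 * γ * (γ - 1))) := by ring
  ext ⟨x, y⟩
  simp only [Set.mem_setOf_eq, Set.mem_singleton_iff, Prod.mk.injEq]
  constructor
  · rintro ⟨hx, hy, hline, hell⟩
    have hq : (2 * κ ^ 2 + γ ^ 3) * y ^ 2 - 2 * (κ ^ 2 + γ ^ 2) * y + γ = 0 := by
      linear_combination κ ^ 2 * hell - γ * (1 - γ * y + κ * x) * hline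
    have hquad : ((2 * κ ^ 2 + γ ^ 3) * y - (κ ^ 2 + γ ^ 2 - κ * s)) *
        ((2 * κ ^ 2 + γ ^ 3) * y - (κ ^ 2 + γ ^ 2 + κ * s)) = 0 := by
      linear_combination (2 * κ ^ 2 + γ ^ 3) * hq - κ ^ 2 * hs2
    have hyD : (2 * κ ^ 2 + γ ^ 3) * y = κ ^ 2 + γ ^ 2 - κ * s := by
      rcases mul_eq_zero.mp hquad with h1 | h2
      · linear_combination h1
      · by_cases hκ : κ = 0
        · subst hκ; linear_combination h2
        · exfalso
          have hxval : x = ((2 - γ) * κ - γ * s) / (2 * κ ^ 2 + γ ^ 3) := by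
            rw [eq_div_iff hDne]
            have hmul : κ * (x * (2 * κ ^ 2 + γ ^ 3)) = κ * ((2 - γ) * κ - γ * s) := by
              linear_combination (2 * κ ^ 2 + γ ^ 3) * hline - γ * h2
            exact mul_left_cancel₀ hκ hmul
          have : x ≤ 0 := by
            rw [hxval]
            exact div_nonpos_of_nonpos_of_nonneg hαle hD.le
          linarith
    have hy_eq : y = (κ ^ 2 + γ ^ 2 - κ * s) / (2 * κ ^ 2 + γ ^ 3) := by
      rw [eq_div_iff hDne]; linear_combination hyD
    refine ⟨?_, hy_eq⟩
    have hx2 : γ * (x * (2 * κ ^ 2 + γ ^ 3)) ^ 2 = γ * ((2 - γ) * κ + γ * s) ^ 2 := by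
      linear_combination (2 * κ ^ 2 + γ ^ 3) ^ 2 * hell +
        (2 * (2 * κ ^ 2 + γ ^ 3) - 2 * (2 * κ ^ 2 + γ ^ 3) * y
          - 2 * (κ ^ 2 + γ ^ 2 - κ * s)) * hyD - (2 * κ ^ 2 + γ ^ 3) * hs2
    have hx2' : (x * (2 * κ ^ 2 + γ ^ 3)) ^ 2 = ((2 - γ) * κ + γ * s) ^ 2 :=
      mul_left_cancel₀ (ne_of_gt hγ) hx2
    have hfac : (x * (2 * κ ^ 2 + γ ^ 3) - ((2 - γ) * κ + γ * s)) *
        (x * (2 * κ ^ 2 + γ ^ 3) + ((2 - γ) * κ + γ * s)) = 0 := by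
      linear_combination hx2'
    rcases mul_eq_zero.mp hfac with h1 | h2
    · rw [eq_div_iff hDne]; linarith
    · exfalso
      nlinarith [mul_pos hx hD]
  · rintro ⟨hx, hy⟩
    subst hx; subst hy
    refine ⟨div_pos hαpos hD, div_pos hβpos hD, ?_, ?_⟩
    · field_simp
      ring
    · field_simp
      linear_combination (2 * κ ^ 2 + γ ^ 3) * hs2
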